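/- The weaving operation on trace structures is associative: for trace structures R, S, T, (R || S) || T = R || (S || T). -/

import Mathlib

/-- A trace structure: input alphabet, output alphabet, and a set of traces. -/
structure TraceStructure (α : Type*) where
  i : Set α
  o : Set α
  t : Set (List α)

namespace TraceStructure

variable {α : Type*}

/-- Total alphabet. -/
def alph (R : TraceStructure α) : Set α := R.i ∪ R.o

/-- Projection of a trace onto an alphabet: delete all symbols not in `A`. -/
noncomputable def projT (A : Set α) (w : List α) : List α :=
  w.filter (fun x => @decide (x ∈ A) (Classical.propDecidable _))

/-- Reflection: swap input and output alphabets. -/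
def reflect (R : TraceStructure α) : TraceStructure α := ⟨R.o, R.i, R.t⟩

/-- Weave of two trace structures. -/
noncomputable def weave (R S : TraceStructure α) : TraceStructure α :=
  ⟨R.i ∪ S.i, R.o ∪ S.o,
   {w | (∀ x ∈ w, x ∈ R.alph ∪ S.alph) ∧ projT R.alph w ∈ R.t ∧ projT S.alph w ∈ S.t}⟩

/-- Union of two trace structures. -/
def tsUnion (R S : TraceStructure α) : TraceStructure α :=
  ⟨R.i ∪ S.i, R.o ∪ S.o, R.t ∪ S.t⟩

/-- Projection of a trace structure onto an alphabet `A`. -/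
noncomputable def tsProj (R : TraceStructure α) (A : Set α) : TraceStructure α :=
  ⟨R.i ∩ A, R.o ∩ A, {w | ∃ u ∈ R.t, w = projT A u}⟩

/-- Prefix closure of a set of traces. -/
def prefSet (T : Set (List α)) : Set (List α) := {s | ∃ u, s ++ u ∈ T}

/-- Prefix closure of a trace structure. -/
def pref (R : TraceStructure α) : TraceStructure α := ⟨R.i, R.o, prefSet R.t⟩

/-- Kleene star (arbitrary repetition) of a set of traces. -/
def star (L : Set (List α)) : Set (List α) :=
  {w | ∃ ls : List (List α), (∀ u ∈ ls, u ∈ L) ∧ w = ls.flatten}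

/-- A set of traces is prefix-closed. -/
def PrefixClosed (T : Set (List α)) : Prop := ∀ s u : List α, s ++ u ∈ T → s ∈ T

/-- Rule R₀: no two consecutive transitions on the same wire. -/
def SatR0 (R : TraceStructure α) : Prop :=
  ∀ s ∈ R.t, ∀ x ∈ R.alph, s ++ [x, x] ∉ R.t

/-- Rule R₁: symbols of the same type commute. -/
def SatR1 (R : TraceStructure α) : Prop :=
  ∀ (s t : List α) (x y : α),
    ((x ∈ R.i ∧ y ∈ R.i) ∨ (x ∈ R.o ∧ y ∈ R.o)) →
    (s ++ [x, y] ++ t ∈ R.t ↔ s ++ [y, x] ++ t ∈ R.t)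

/-- Rule R₂′. -/
def SatR2' (R : TraceStructure α) : Prop :=
  ∀ (s t : List α) (x y z : α),
    ((x ∈ R.i ∧ z ∈ R.i ∧ y ∈ R.o) ∨ (x ∈ R.o ∧ z ∈ R.o ∧ y ∈ R.i)) →
    s ++ [x, y] ++ t ++ [z] ∈ R.t → s ++ [y, x] ++ t ∈ R.t →
    s ++ [y, x] ++ t ++ [z] ∈ R.t

/-- Rule R₃′ (synchronization class). -/
def SatR3' (R : TraceStructure α) : Prop :=
  ∀ (s : List α) (x y : α), x ≠ y → x ∈ R.alph → y ∈ R.alph →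
    s ++ [x] ∈ R.t → s ++ [y] ∈ R.t → s ++ [x, y] ∈ R.t

/-- Rule R₃′′ (data communication class). -/
def SatR3'' (R : TraceStructure α) : Prop :=
  ∀ (s : List α) (x y : α), x ≠ y → x ∈ R.alph → y ∈ R.alph →
    ¬(x ∈ R.i ∧ y ∈ R.i) →
    s ++ [x] ∈ R.t → s ++ [y] ∈ R.t → s ++ [x, y] ∈ R.t

/-- Rule R₃′′′ (arbitration class). -/
def SatR3''' (R : TraceStructure α) : Prop :=
  ∀ (s : List α) (x y : α),
    ((x ∈ R.i ∧ y ∈ R.o) ∨ (x ∈ R.o ∧ y ∈ R.i)) →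
    s ++ [x] ∈ R.t → s ++ [y] ∈ R.t → s ++ [x, y] ∈ R.t

/-- The WIRE component `pref *[a?; b!]`. -/
def wire (a b : α) : TraceStructure α :=
  ⟨{a}, {b}, prefSet (star {[a, b]})⟩

/-- The C-element `pref *[(a? || b?); c!]`. -/
def cElement (a b c : α) : TraceStructure α :=
  ⟨{a, b}, {c}, prefSet (star ({[a, b, c], [b, a, c]} : Set (List α)))⟩

/-- Interleaving (shuffle) of two traces. -/
inductive Interleave : List α → List α → List α → Prop
  | nil : Interleave [] [] []
  | left {x : α} {u v t : List α} : Interleave u v t → Interleave (x :: u) v (x :: t)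
  | right {x : α} {u v t : List α} : Interleave u v t → Interleave u (x :: v) (x :: t)

lemma ts_ext {R S : TraceStructure α} (h1 : R.i = S.i) (h2 : R.o = S.o)
    (h3 : R.t = S.t) : R = S := by cases R; cases S; simp_all

lemma projT_projT (A B : Set α) (h : A ⊆ B) (w : List α) :
    projT A (projT B w) = projT A w := by
  unfold projT
  rw [List.filter_filter]
  apply List.filter_congr
  intro x _
  by_cases hx : x ∈ A
  · rw [@decide_eq_true _ (Classical.propDecidable _) hx,
        @decide_eq_true _ (Classical.propDecidable _) (h hx)]; rfl
  · rw [@decide_eq_false _ (Classical.propDecidable _) hx, Bool.false_and]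

lemma mem_projT {A : Set α} {w : List α} {x : α} (hx : x ∈ projT A w) : x ∈ A := by
  unfold projT at hx
  exact @of_decide_eq_true _ (Classical.propDecidable _) (List.mem_filter.mp hx).2

lemma mem_projT_mem {A : Set α} {w : List α} {x : α} (hx : x ∈ projT A w) : x ∈ w :=
  (List.mem_filter.mp hx).1

lemma alph_weave (R S : TraceStructure α) : (weave R S).alph = R.alph ∪ S.alph := by
  ext x; simp [alph, weave]; tauto

lemma mem_weave_t {R S : TraceStructure α} {w : List α} :
    w ∈ (weave R S).t ↔
      (∀ x ∈ w, x ∈ R.alph ∪ S.alph) ∧ projT R.alph w ∈ R.t ∧ projT S.alph w ∈ S.t :=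
  Iff.rfl


end TraceStructure

open TraceStructure

theorem weave_assoc {α : Type*} (R S T : TraceStructure α) :
    weave (weave R S) T = weave R (weave S T) := by
  refine ts_ext (Set.union_assoc _ _ _) (Set.union_assoc _ _ _) ?_
  ext w
  show w ∈ (weave (weave R S) T).t ↔ w ∈ (weave R (weave S T)).t
  rw [mem_weave_t, mem_weave_t, mem_weave_t, mem_weave_t, alph_weave, alph_weave]
  constructor
  · rintro ⟨h1, ⟨_, hR, hS⟩, hT⟩
    rw [projT_projT R.alph _ Set.subset_union_left] at hR
    rw [projT_projT S.alph _ Set.subset_union_right] at hS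
    refine ⟨fun x hx => by have := h1 x hx; simp only [Set.mem_union] at this ⊢; tauto,
      hR, fun x hx => mem_projT hx, ?_, ?_⟩
    · rw [projT_projT S.alph _ Set.subset_union_left]; exact hS
    · rw [projT_projT T.alph _ Set.subset_union_right]; exact hT
  · rintro ⟨h1, hR, _, hS, hT⟩
    rw [projT_projT S.alph _ Set.subset_union_left] at hS
    rw [projT_projT T.alph _ Set.subset_union_right] at hT
    refine ⟨fun x hx => by have := h1 x hx; simp only [Set.mem_union] at this ⊢; tauto,
      ⟨fun x hx => mem_projT hx, ?_, ?_⟩, hT⟩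
    · rw [projT_projT R.alph _ Set.subset_union_left]; exact hR
    · rw [projT_projT S.alph _ Set.subset_union_right]; exact hS
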